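/- The function s ↦ ζ_{A₂}(s)/s is strictly decreasing on (2, ∞). In particular, for all α > β > 2, one has (α/β)·ζ_{A₂}(β) − ζ_{A₂}(α) > 0. -/
import Mathlib


noncomputable section

/-- A point of the Euclidean plane with coordinates `a`, `b`. -/
def vec2 (a b : ℝ) : EuclideanSpace ℝ (Fin 2) := (WithLp.equiv 2 (Fin 2 → ℝ)).symm ![a, b]

/-- The lattice (as a set of points) generated by `u` and `v`. -/
def latticeSet (u v : EuclideanSpace ℝ (Fin 2)) : Set (EuclideanSpace ℝ (Fin 2)) :=
  {p | ∃ m n : ℤ, p = (m : ℝ) • u + (n : ℝ) • v}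

/-- The determinant of the pair of plane vectors `(u, v)`. -/
def det2 (u v : EuclideanSpace ℝ (Fin 2)) : ℝ := u 0 * v 1 - u 1 * v 0

/-- `L` is a two-dimensional lattice, i.e. `L = ℤu ⊕ ℤv` for a basis `(u,v)` of ℝ². -/
def IsLattice2 (L : Set (EuclideanSpace ℝ (Fin 2))) : Prop :=
  ∃ u v : EuclideanSpace ℝ (Fin 2), det2 u v ≠ 0 ∧ L = latticeSet u v

/-- `L` is a two-dimensional lattice of co-volume `V = |det(u,v)|`. -/
def IsLattice2OfCovol (L : Set (EuclideanSpace ℝ (Fin 2))) (V : ℝ) : Prop :=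
  ∃ u v : EuclideanSpace ℝ (Fin 2), det2 u v ≠ 0 ∧ |det2 u v| = V ∧ L = latticeSet u v

/-- The Epstein zeta function of a set of points: `ζ_L(s) = Σ'_{p ∈ L, p ≠ 0} |p|^{-s}`. -/
def epsteinZeta (L : Set (EuclideanSpace ℝ (Fin 2))) (s : ℝ) : ℝ :=
  ∑' p : ↥(L \ {0}), ‖(p : EuclideanSpace ℝ (Fin 2))‖ ^ (-s)

/-- The Lennard-Jones type energy `E_f[L] = Σ'_{p ∈ L, p ≠ 0} (a|p|^{-α} - b|p|^{-β})`. -/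
def LJenergy (a b α β : ℝ) (L : Set (EuclideanSpace ℝ (Fin 2))) : ℝ :=
  ∑' p : ↥(L \ {0}),
    (a * ‖(p : EuclideanSpace ℝ (Fin 2))‖ ^ (-α) - b * ‖(p : EuclideanSpace ℝ (Fin 2))‖ ^ (-β))

/-- The triangular lattice `A₂ = √(2/√3)·[ℤ(1,0) ⊕ ℤ(1/2,√3/2)]`, of co-volume 1. -/
def triangularLattice : Set (EuclideanSpace ℝ (Fin 2)) :=
  latticeSet (Real.sqrt (2 / Real.sqrt 3) • vec2 1 0)
    (Real.sqrt (2 / Real.sqrt 3) • vec2 (1 / 2) (Real.sqrt 3 / 2))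

/-- The square lattice `ℤ² = ℤ(1,0) ⊕ ℤ(0,1)`. -/
def squareLattice : Set (EuclideanSpace ℝ (Fin 2)) := latticeSet (vec2 1 0) (vec2 0 1)

/-- `L` is the image of `L'` under an orthogonal transformation of ℝ². -/
def IsRotationOf (L L' : Set (EuclideanSpace ℝ (Fin 2))) : Prop :=
  ∃ O : EuclideanSpace ℝ (Fin 2) ≃ₗᵢ[ℝ] EuclideanSpace ℝ (Fin 2), L = O '' L'

/-- The unit co-volume lattice parametrized by `(x, y)` in the half-fundamental domain:
`ℤu ⊕ ℤv` with `u = (1/√y, 0)` and `v = (x/√y, √y)`. -/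
def latticeXY (x y : ℝ) : Set (EuclideanSpace ℝ (Fin 2)) :=
  latticeSet (vec2 (1 / Real.sqrt y) 0) (vec2 (x / Real.sqrt y) (Real.sqrt y))

/-- The Riemann zeta function `ζ(s) = Σ_{m ≥ 1} m^{-s}` (real variable version). -/
def riemannZetaReal (s : ℝ) : ℝ := ∑' n : ℕ+, (n : ℝ) ^ (-s)

end


noncomputable section TriAux

open Real

/-- The generator map of the triangular lattice. -/
def triPhi (x : Fin 2 → ℤ) : EuclideanSpace ℝ (Fin 2) :=
  ((x 0 : ℝ)) • (Real.sqrt (2 / Real.sqrt 3) • vec2 1 0) +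
    ((x 1 : ℝ)) • (Real.sqrt (2 / Real.sqrt 3) • vec2 (1 / 2) (Real.sqrt 3 / 2))

lemma vec2_apply_zero (a b : ℝ) : vec2 a b 0 = a := rfl

lemma vec2_apply_one (a b : ℝ) : vec2 a b 1 = b := rfl

lemma sqrt3_pos : (0:ℝ) < Real.sqrt 3 := Real.sqrt_pos.2 (by norm_num)

lemma csq : (Real.sqrt (2 / Real.sqrt 3)) ^ 2 = 2 / Real.sqrt 3 :=
  Real.sq_sqrt (by positivity)

lemma triPhi_apply_zero (x : Fin 2 → ℤ) :
    triPhi x 0 = Real.sqrt (2 / Real.sqrt 3) * ((x 0 : ℝ) + (x 1 : ℝ) / 2) := by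
  show (x 0 : ℝ) * (Real.sqrt (2 / Real.sqrt 3) * vec2 1 0 0)
      + (x 1 : ℝ) * (Real.sqrt (2 / Real.sqrt 3) * vec2 (1/2) (Real.sqrt 3 / 2) 0)
      = _
  rw [vec2_apply_zero, vec2_apply_zero]; ring

lemma triPhi_apply_one (x : Fin 2 → ℤ) :
    triPhi x 1 = Real.sqrt (2 / Real.sqrt 3) * ((x 1 : ℝ) * (Real.sqrt 3 / 2)) := by
  show (x 0 : ℝ) * (Real.sqrt (2 / Real.sqrt 3) * vec2 1 0 1)
      + (x 1 : ℝ) * (Real.sqrt (2 / Real.sqrt 3) * vec2 (1/2) (Real.sqrt 3 / 2) 1)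
      = _
  rw [vec2_apply_one, vec2_apply_one]; ring

lemma triPhi_norm_sq (x : Fin 2 → ℤ) :
    ‖triPhi x‖ ^ 2 = (2 / Real.sqrt 3) *
      ((x 0 : ℝ) ^ 2 + (x 0 : ℝ) * (x 1 : ℝ) + (x 1 : ℝ) ^ 2) := by
  have h := EuclideanSpace.norm_eq (triPhi x)
  rw [h, Real.sq_sqrt (by positivity)]
  rw [Fin.sum_univ_two, triPhi_apply_zero, triPhi_apply_one]
  have h3 : Real.sqrt 3 ^ 2 = 3 := Real.sq_sqrt (by norm_num)
  simp only [Real.norm_eq_abs, sq_abs, mul_pow, csq]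
  have hB : (Real.sqrt 3 / 2) ^ 2 = 3 / 4 := by rw [div_pow, h3]; norm_num
  rw [hB]; ring

lemma quad_ge_one {m n : ℤ} (h : ¬(m = 0 ∧ n = 0)) :
    (1 : ℝ) ≤ (m : ℝ) ^ 2 + (m : ℝ) * (n : ℝ) + (n : ℝ) ^ 2 := by
  have h1 : (1 : ℤ) ≤ m ^ 2 + m * n + n ^ 2 := by
    rcases eq_or_ne n 0 with hn | hn
    · subst hn
      have hm : m ≠ 0 := fun hm => h ⟨hm, rfl⟩
      have : 1 ≤ m ^ 2 := by rcases hm.lt_or_gt with h' | h' <;> nlinarith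
      nlinarith
    · have : 1 ≤ n ^ 2 := by rcases hn.lt_or_gt with h' | h' <;> nlinarith
      nlinarith [sq_nonneg (2 * m + n)]
  exact_mod_cast h1

lemma triPhi_norm_ge_one {x : Fin 2 → ℤ} (hx : x ≠ 0) : 1 ≤ ‖triPhi x‖ := by
  have hx' : ¬(x 0 = 0 ∧ x 1 = 0) := by
    rintro ⟨h0, h1⟩
    apply hx
    funext i
    fin_cases i <;> simpa
  have hq := quad_ge_one hx'
  have hs : (1:ℝ) ≤ 2 / Real.sqrt 3 := by
    rw [le_div_iff₀ sqrt3_pos, one_mul]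
    nlinarith [Real.sq_sqrt (by norm_num : (3:ℝ) ≥ 0), sqrt3_pos]
  have h2 : (1:ℝ) ≤ ‖triPhi x‖ ^ 2 := by
    rw [triPhi_norm_sq]; nlinarith
  nlinarith [norm_nonneg (triPhi x)]

lemma triPhi_ne_zero {x : Fin 2 → ℤ} (hx : x ≠ 0) : triPhi x ≠ 0 := by
  have := triPhi_norm_ge_one hx
  intro h
  rw [h, norm_zero] at this
  linarith

lemma triPhi_injective : Function.Injective triPhi := by
  intro x y hxy
  have h1 : triPhi x 1 = triPhi y 1 := by rw [hxy]
  have h0 : triPhi x 0 = triPhi y 0 := by rw [hxy]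
  rw [triPhi_apply_one, triPhi_apply_one] at h1
  rw [triPhi_apply_zero, triPhi_apply_zero] at h0
  have hc : (0:ℝ) < Real.sqrt (2 / Real.sqrt 3) := Real.sqrt_pos.2 (by positivity)
  have e1 : x 1 = y 1 := by
    have h2 := mul_left_cancel₀ hc.ne' h1
    have h3 := sqrt3_pos
    field_simp at h2
    exact_mod_cast h2
  have e1r : (x 1 : ℝ) = (y 1 : ℝ) := by exact_mod_cast e1
  have e0 : x 0 = y 0 := by
    have h2 := mul_left_cancel₀ hc.ne' h0
    have : (x 0 : ℝ) = (y 0 : ℝ) := by linarith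
    exact_mod_cast this
  funext i
  fin_cases i
  · simpa using e0
  · simpa using e1

lemma triangularLattice_eq : triangularLattice = Set.range triPhi := by
  ext p
  constructor
  · rintro ⟨m, n, rfl⟩
    exact ⟨![m, n], rfl⟩
  · rintro ⟨x, rfl⟩
    exact ⟨x 0, x 1, rfl⟩

lemma triangularLattice_diff_eq :
    triangularLattice \ {0} = triPhi '' {x | x ≠ 0} := by
  rw [triangularLattice_eq]
  ext p
  constructor
  · rintro ⟨⟨x, rfl⟩, hp⟩
    refine ⟨x, fun hx => ?_, rfl⟩
    apply hp
    simp only [Set.mem_singleton_iff]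
    rw [hx]
    simp [triPhi]
  · rintro ⟨x, hx, rfl⟩
    exact ⟨⟨x, rfl⟩, by simpa using triPhi_ne_zero hx⟩

lemma triPhi_norm_ge (x : Fin 2 → ℤ) :
    Real.sqrt (1 / Real.sqrt 3) * ‖x‖ ≤ ‖triPhi x‖ := by
  have h3 := sqrt3_pos
  have ha : (0:ℝ) < Real.sqrt (1 / Real.sqrt 3) := Real.sqrt_pos.2 (by positivity)
  have hsq : Real.sqrt (1 / Real.sqrt 3) ^ 2 = 1 / Real.sqrt 3 :=
    Real.sq_sqrt (by positivity)
  have habs0 : ((x 0).natAbs : ℝ) ^ 2 = (x 0 : ℝ) ^ 2 := by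
    have : ((x 0).natAbs : ℝ) = |(x 0 : ℝ)| := by
      rw [← Int.cast_natCast, Int.natCast_natAbs]; push_cast; rfl
    rw [this, sq_abs]
  have habs1 : ((x 1).natAbs : ℝ) ^ 2 = (x 1 : ℝ) ^ 2 := by
    have : ((x 1).natAbs : ℝ) = |(x 1 : ℝ)| := by
      rw [← Int.cast_natCast, Int.natCast_natAbs]; push_cast; rfl
    rw [this, sq_abs]
  have hx2 : ‖x‖ ^ 2 ≤ (x 0 : ℝ) ^ 2 + (x 1 : ℝ) ^ 2 := by
    rw [EisensteinSeries.norm_eq_max_natAbs, Nat.cast_max]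
    rcases max_cases ((x 0).natAbs : ℝ) ((x 1).natAbs : ℝ) with ⟨h, _⟩ | ⟨h, _⟩
    · rw [h, habs0]; nlinarith [sq_nonneg ((x 1 : ℝ))]
    · rw [h, habs1]; nlinarith [sq_nonneg ((x 0 : ℝ))]
  have key : (Real.sqrt (1 / Real.sqrt 3) * ‖x‖) ^ 2 ≤ ‖triPhi x‖ ^ 2 := by
    rw [mul_pow, hsq, triPhi_norm_sq]
    have hq : ((x 0 : ℝ) ^ 2 + (x 1 : ℝ) ^ 2) ≤
        2 * ((x 0 : ℝ) ^ 2 + (x 0 : ℝ) * (x 1 : ℝ) + (x 1 : ℝ) ^ 2) := by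
      nlinarith [sq_nonneg ((x 0 : ℝ) + (x 1 : ℝ))]
    calc 1 / Real.sqrt 3 * ‖x‖ ^ 2
        ≤ 1 / Real.sqrt 3 *
          (2 * ((x 0 : ℝ) ^ 2 + (x 0 : ℝ) * (x 1 : ℝ) + (x 1 : ℝ) ^ 2)) :=
          mul_le_mul_of_nonneg_left (hx2.trans hq) (by positivity)
      _ = 2 / Real.sqrt 3 * ((x 0 : ℝ) ^ 2 + (x 0 : ℝ) * (x 1 : ℝ) + (x 1 : ℝ) ^ 2) := by
          ring
  have h1 : 0 ≤ Real.sqrt (1 / Real.sqrt 3) * ‖x‖ := by positivity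
  nlinarith [norm_nonneg (triPhi x)]

lemma triSummable {s : ℝ} (hs : 2 < s) :
    Summable fun p : ↥(triangularLattice \ {0}) =>
      ‖(p : EuclideanSpace ℝ (Fin 2))‖ ^ (-s) := by
  have ha : (0:ℝ) < Real.sqrt (1 / Real.sqrt 3) :=
    Real.sqrt_pos.2 (by positivity)
  have hfull : Summable fun x : Fin 2 → ℤ => ‖triPhi x‖ ^ (-s) := by
    refine Summable.of_nonneg_of_le (fun x => Real.rpow_nonneg (norm_nonneg _) _) ?_
      ((EisensteinSeries.summable_one_div_norm_rpow hs).mul_left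
        (Real.sqrt (1 / Real.sqrt 3) ^ (-s)))
    · intro x
      rcases eq_or_ne x 0 with rfl | hx
      · have : triPhi (0 : Fin 2 → ℤ) = 0 := by simp [triPhi]
        rw [this, norm_zero, Real.zero_rpow (by linarith), norm_zero,
          Real.zero_rpow (by linarith), mul_zero]
      · have hxpos : (0:ℝ) < ‖x‖ := norm_pos_iff.2 hx
        have h1 : Real.sqrt (1 / Real.sqrt 3) * ‖x‖ ≤ ‖triPhi x‖ := triPhi_norm_ge x
        calc ‖triPhi x‖ ^ (-s) ≤ (Real.sqrt (1 / Real.sqrt 3) * ‖x‖) ^ (-s) :=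
              Real.rpow_le_rpow_of_nonpos (by positivity) h1 (by linarith)
          _ = Real.sqrt (1 / Real.sqrt 3) ^ (-s) * ‖x‖ ^ (-s) :=
              Real.mul_rpow ha.le (norm_nonneg _)
  rw [triangularLattice_diff_eq]
  rw [← (Equiv.Set.image triPhi {x | x ≠ 0} triPhi_injective).summable_iff]
  have : ((fun p : ↥(triPhi '' {x | x ≠ 0}) =>
      ‖(p : EuclideanSpace ℝ (Fin 2))‖ ^ (-s)) ∘
        (Equiv.Set.image triPhi {x | x ≠ 0} triPhi_injective)) =
      fun x : ↥{x : Fin 2 → ℤ | x ≠ 0} => ‖triPhi (x : Fin 2 → ℤ)‖ ^ (-s) := by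
    funext x
    simp only [Function.comp_apply]
    rw [show ((Equiv.Set.image triPhi {x | x ≠ 0} triPhi_injective) x :
      EuclideanSpace ℝ (Fin 2)) = triPhi x from rfl]
  rw [this]
  exact hfull.subtype _

lemma triNonempty : Nonempty ↥(triangularLattice \ {0}) := by
  refine ⟨⟨triPhi ![1, 0], ?_⟩⟩
  rw [triangularLattice_diff_eq]
  exact ⟨![1, 0], by intro h; simpa using congrFun h 0, rfl⟩

end TriAux

/-- The function `s ↦ ζ_{A₂}(s)/s` is strictly decreasing on `(2,∞)`; in particular,
for all `α > β > 2`, `(α/β)ζ_{A₂}(β) - ζ_{A₂}(α) > 0`. -/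
theorem triangular_zeta_div_s_strictAnti :
    StrictAntiOn (fun s : ℝ => epsteinZeta triangularLattice s / s) (Set.Ioi 2) ∧
    ∀ α β : ℝ, 2 < β → β < α →
      0 < (α / β) * epsteinZeta triangularLattice β - epsteinZeta triangularLattice α := by
  have main : ∀ β ∈ Set.Ioi (2:ℝ), ∀ α ∈ Set.Ioi (2:ℝ), β < α →
      epsteinZeta triangularLattice α / α < epsteinZeta triangularLattice β / β := by
    intro β hβ α hα hβα
    simp only [Set.mem_Ioi] at hβ hα
    have hβ0 : (0:ℝ) < β := by linarith
    have hα0 : (0:ℝ) < α := by linarith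
    unfold epsteinZeta
    rw [← tsum_div_const, ← tsum_div_const]
    have hterm : ∀ p : ↥(triangularLattice \ {0}),
        ‖(p : EuclideanSpace ℝ (Fin 2))‖ ^ (-α) / α <
        ‖(p : EuclideanSpace ℝ (Fin 2))‖ ^ (-β) / β := by
      intro p
      obtain ⟨hp, hp0⟩ := p.2
      have hp2 : (p : EuclideanSpace ℝ (Fin 2)) ∈ Set.range triPhi := by
        rw [← triangularLattice_eq]; exact hp
      obtain ⟨x, hx⟩ := hp2
      have hx0 : x ≠ 0 := by
        rintro rfl
        apply hp0
        simp only [Set.mem_singleton_iff, ← hx]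
        simp [triPhi]
      have hr : 1 ≤ ‖(p : EuclideanSpace ℝ (Fin 2))‖ := by
        rw [← hx]; exact triPhi_norm_ge_one hx0
      have h1 : ‖(p : EuclideanSpace ℝ (Fin 2))‖ ^ (-α) ≤
          ‖(p : EuclideanSpace ℝ (Fin 2))‖ ^ (-β) :=
        Real.rpow_le_rpow_of_exponent_le hr (by linarith)
      have h2 : (0:ℝ) < ‖(p : EuclideanSpace ℝ (Fin 2))‖ ^ (-α) :=
        Real.rpow_pos_of_pos (by linarith) _
      calc ‖(p : EuclideanSpace ℝ (Fin 2))‖ ^ (-α) / α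
          < ‖(p : EuclideanSpace ℝ (Fin 2))‖ ^ (-α) / β :=
            div_lt_div_of_pos_left h2 hβ0 hβα
        _ ≤ ‖(p : EuclideanSpace ℝ (Fin 2))‖ ^ (-β) / β := by
            gcongr
    obtain ⟨p0⟩ := triNonempty
    exact Summable.tsum_lt_tsum (fun p => (hterm p).le) (hterm p0)
      ((triSummable hα).div_const α) ((triSummable hβ).div_const β)
  refine ⟨fun β hβ α hα hβα => main β hβ α hα hβα, ?_⟩
  intro α β hβ hβα
  have h := main β (by simpa using hβ) α (by simp; linarith) hβα
  have hβ0 : (0:ℝ) < β := by linarith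
  have hα0 : (0:ℝ) < α := by linarith
  rw [div_lt_div_iff₀ hα0 hβ0] at h
  have : epsteinZeta triangularLattice α < α / β * epsteinZeta triangularLattice β := by
    rw [div_mul_eq_mul_div, lt_div_iff₀ hβ0]
    linarith
  linarith
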